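/- Let O be a discrete valuation ring with uniformizer ϖ and fraction field F, let n ≥ 1, let J be the parahoric subgroup of GL_{2n}(O), and set t := ι(ϖ·1_n, 1_n). Let Rep ⊆ M_n(O) be any set of representatives for the quotient M_n(O)/ϖM_n(O). Then the double coset J·t·J is the union over m ∈ Rep of the right cosets [[1_n, m],[0, 1_n]]·t·J, and these cosets are pairwise disjoint for distinct m ∈ Rep. -/

import Mathlib

open Matrix

/-- The block diagonal matrix `ι(A, D) = [[A, 0], [0, D]]`. -/
def iotaBlk {n : ℕ} {R : Type*} [CommRing R] (A D : Matrix (Fin n) (Fin n) R) :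
    Matrix (Fin n ⊕ Fin n) (Fin n ⊕ Fin n) R :=
  Matrix.fromBlocks A 0 0 D

/-- The matrix `t(a) = ι(a·1_n, 1_n)`. -/
def tMat (n : ℕ) (R : Type*) [CommRing R] (a : R) :
    Matrix (Fin n ⊕ Fin n) (Fin n ⊕ Fin n) R :=
  iotaBlk (a • (1 : Matrix (Fin n) (Fin n) R)) 1

/-- `g ∈ GL_m(O)`: `g` is invertible and both `g` and its inverse have entries in (the image
of) `O`. -/
def inGLO (O F : Type*) [CommRing O] [CommRing F] [Algebra O F]
    {m : Type*} [Fintype m] [DecidableEq m] (g : Matrix m m F) : Prop :=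
  ∃ g' : Matrix m m F, g * g' = 1 ∧ g' * g = 1 ∧
    (∀ i j, g i j ∈ (algebraMap O F).range) ∧ (∀ i j, g' i j ∈ (algebraMap O F).range)

/-- `g ∈ J`, the parahoric subgroup of type `(n,n)`: `g ∈ GL_{2n}(O)` and the lower-left
`n × n` block of `g` has all entries in `ϖO`. -/
def inParahoric (O F : Type*) [CommRing O] [CommRing F] [Algebra O F] (ϖ : O)
    {n : ℕ} (g : Matrix (Fin n ⊕ Fin n) (Fin n ⊕ Fin n) F) : Prop :=
  inGLO O F g ∧
    ∀ i j : Fin n, ∃ c : O, g (Sum.inr i) (Sum.inl j) = algebraMap O F (ϖ * c)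

/-- The right coset `[[1, m],[0, 1]] · t · J` for a representative `m ∈ M_n(O)`. -/
def cosetOf (n : ℕ) (O F : Type*) [CommRing O] [CommRing F] [Algebra O F] (ϖ : O)
    (m : Matrix (Fin n) (Fin n) O) : Set (Matrix (Fin n ⊕ Fin n) (Fin n ⊕ Fin n) F) :=
  {g | ∃ k, inParahoric O F ϖ k ∧
    g = Matrix.fromBlocks 1 (m.map (algebraMap O F)) 0 1 * tMat n F (algebraMap O F ϖ) * k}

section Aux

variable {n : ℕ} {O : Type*} [CommRing O] [IsDomain O]
  {F : Type*} [Field F] [Algebra O F] [IsFractionRing O F] (ϖ : O)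

/-- unipotent upper triangular block matrix over O -/
def Umat (m : Matrix (Fin n) (Fin n) O) : Matrix (Fin n ⊕ Fin n) (Fin n ⊕ Fin n) O :=
  Matrix.fromBlocks 1 m 0 1

/-- lower-left block entries lie in (ϖ) -/
def POk (K : Matrix (Fin n ⊕ Fin n) (Fin n ⊕ Fin n) O) : Prop :=
  ∀ i j : Fin n, K (Sum.inr i) (Sum.inl j) ∈ Ideal.span ({ϖ} : Set O)

lemma mapinj {a b : Type*} {X Y : Matrix a b O}
    (h : X.map (algebraMap O F) = Y.map (algebraMap O F)) : X = Y := by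
  ext i j
  exact IsFractionRing.injective O F (congrFun (congrFun h i) j)

lemma map_tMat : (tMat n O ϖ).map (algebraMap O F) = tMat n F (algebraMap O F ϖ) := by
  ext i j
  cases i <;> cases j <;>
    simp [tMat, iotaBlk, Matrix.map_apply, Matrix.one_apply, Matrix.smul_apply, smul_eq_mul,
      mul_ite, mul_one, mul_zero, apply_ite (algebraMap O F), Algebra.smul_def,
      Matrix.algebraMap_matrix_apply]

lemma map_Umat (m : Matrix (Fin n) (Fin n) O) :
    (Umat m).map (algebraMap O F)
      = Matrix.fromBlocks 1 (m.map (algebraMap O F)) 0 1 := by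
  rw [Umat, Matrix.fromBlocks_map, Matrix.map_one _ (map_zero _) (map_one _),
    Matrix.map_zero _ (map_zero _)]

lemma Umat_mul (a b : Matrix (Fin n) (Fin n) O) : Umat a * Umat b = Umat (a + b) := by
  simp [Umat, Matrix.fromBlocks_multiply, add_comm]

/-- lift an element of the parahoric to data over O -/
lemma lift_parahoric {g : Matrix (Fin n ⊕ Fin n) (Fin n ⊕ Fin n) F}
    (hg : inParahoric O F ϖ g) :
    ∃ K Kinv : Matrix (Fin n ⊕ Fin n) (Fin n ⊕ Fin n) O,
      g = K.map (algebraMap O F) ∧ K * Kinv = 1 ∧ Kinv * K = 1 ∧ POk ϖ K := by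
  obtain ⟨⟨g', h1, h2, hO, hO'⟩, hll⟩ := hg
  choose K hK using fun i j => hO i j
  choose Kinv hKinv using fun i j => hO' i j
  have hKg : g = (Matrix.of K).map (algebraMap O F) := by
    ext i j; exact (hK i j).symm
  have hKg' : g' = (Matrix.of Kinv).map (algebraMap O F) := by
    ext i j; exact (hKinv i j).symm
  refine ⟨Matrix.of K, Matrix.of Kinv, hKg, ?_, ?_, ?_⟩
  · apply mapinj (F := F)
    rw [Matrix.map_mul, ← hKg, ← hKg', h1, Matrix.map_one _ (map_zero _) (map_one _)]
  · apply mapinj (F := F)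
    rw [Matrix.map_mul, ← hKg, ← hKg', h2, Matrix.map_one _ (map_zero _) (map_one _)]
  · intro i j
    obtain ⟨c, hc⟩ := hll i j
    rw [Ideal.mem_span_singleton]
    refine ⟨c, IsFractionRing.injective O F ?_⟩
    rw [← hK (Sum.inr i) (Sum.inl j)] at hc
    simpa using hc
/-- build a parahoric element from data over O -/
lemma mk_parahoric {K Kinv : Matrix (Fin n ⊕ Fin n) (Fin n ⊕ Fin n) O}
    (h1 : K * Kinv = 1) (h2 : Kinv * K = 1) (hP : POk ϖ K) :
    inParahoric O F ϖ (K.map (algebraMap O F)) := by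
  refine ⟨⟨Kinv.map (algebraMap O F), ?_, ?_, fun i j => ⟨K i j, rfl⟩,
    fun i j => ⟨Kinv i j, rfl⟩⟩, ?_⟩
  · rw [← Matrix.map_mul, h1, Matrix.map_one _ (map_zero _) (map_one _)]
  · rw [← Matrix.map_mul, h2, Matrix.map_one _ (map_zero _) (map_one _)]
  · intro i j
    obtain ⟨c, hc⟩ := Ideal.mem_span_singleton.mp (hP i j)
    exact ⟨c, by rw [Matrix.map_apply, hc]⟩

lemma POk_mul {K K' : Matrix (Fin n ⊕ Fin n) (Fin n ⊕ Fin n) O}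
    (h : POk ϖ K) (h' : POk ϖ K') : POk ϖ (K * K') := by
  intro i j
  rw [Matrix.mul_apply, Fintype.sum_sum_type]
  refine Ideal.add_mem _ (Ideal.sum_mem _ fun k _ => ?_) (Ideal.sum_mem _ fun k _ => ?_)
  · exact Ideal.mul_mem_right _ _ (h i k)
  · exact Ideal.mul_mem_left _ _ (h' k j)

lemma keyeq (A B C D m E : Matrix (Fin n) (Fin n) O) (hE : ϖ • E = B - m * D) :
    Umat m * tMat n O ϖ * Matrix.fromBlocks (A - m * C) E (ϖ • C) D
      = Matrix.fromBlocks A B C D * tMat n O ϖ := by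
  rw [Umat, tMat, iotaBlk, Matrix.fromBlocks_multiply, Matrix.fromBlocks_multiply,
    Matrix.fromBlocks_multiply]
  refine Matrix.fromBlocks_inj.mpr ⟨?_, ?_, ?_, ?_⟩
  · simp [smul_mul_assoc, mul_smul_comm, mul_sub, smul_sub]
  · simp only [smul_mul_assoc, one_mul, zero_mul, mul_one, mul_zero, add_zero, zero_add]
    rw [hE]
    exact sub_add_cancel _ _
  · simp
  · simp

lemma det_tMat : (tMat n O ϖ).det = ϖ ^ n := by
  rw [tMat, iotaBlk, Matrix.det_fromBlocks_zero₂₁]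
  simp [Matrix.det_smul]

lemma det_Umat (m : Matrix (Fin n) (Fin n) O) : (Umat m).det = 1 := by
  rw [Umat, Matrix.det_fromBlocks_zero₂₁]; simp

lemma tMat_mul_apply (Z : Matrix (Fin n ⊕ Fin n) (Fin n ⊕ Fin n) O) (i j : Fin n) :
    (tMat n O ϖ * Z) (Sum.inl i) (Sum.inr j) = ϖ * Z (Sum.inl i) (Sum.inr j) := by
  conv_lhs => rw [← Matrix.fromBlocks_toBlocks Z]
  rw [tMat, iotaBlk, Matrix.fromBlocks_multiply]
  simp [Matrix.toBlocks₁₂, smul_mul_assoc]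

lemma Umat_mul_tMat_apply (m : Matrix (Fin n) (Fin n) O) (i j : Fin n) :
    (Umat m * tMat n O ϖ) (Sum.inl i) (Sum.inr j) = m i j := by
  rw [Umat, tMat, iotaBlk, Matrix.fromBlocks_multiply]
  simp

end Aux

theorem statement7 (n : ℕ) (hn : 1 ≤ n)
    (O : Type*) [CommRing O] [IsDomain O] [IsDiscreteValuationRing O]
    (F : Type*) [Field F] [Algebra O F] [IsFractionRing O F]
    (ϖ : O) (hϖ : Irreducible ϖ)
    (Rep : Set (Matrix (Fin n) (Fin n) O))
    (hRep : ∀ X : Matrix (Fin n) (Fin n) O,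
      ∃! r, r ∈ Rep ∧ ∀ i j : Fin n, ∃ c : O, X i j - r i j = ϖ * c) :
    ({g | ∃ j₁ j₂ : Matrix (Fin n ⊕ Fin n) (Fin n ⊕ Fin n) F,
        inParahoric O F ϖ j₁ ∧ inParahoric O F ϖ j₂ ∧
        g = j₁ * tMat n F (algebraMap O F ϖ) * j₂}
      = ⋃ m ∈ Rep, cosetOf n O F ϖ m) ∧
    ∀ m ∈ Rep, ∀ m' ∈ Rep, m ≠ m' →
      Disjoint (cosetOf n O F ϖ m) (cosetOf n O F ϖ m') := by
  have hϖ0 : ϖ ≠ 0 := hϖ.ne_zero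
  have hUmat0 : (Umat (0 : Matrix (Fin n) (Fin n) O)) = 1 := by
    rw [Umat]; exact Matrix.fromBlocks_one
  constructor
  · ext g
    simp only [Set.mem_setOf_eq, Set.mem_iUnion, cosetOf]
    constructor
    · rintro ⟨j₁, j₂, hj₁, hj₂, rfl⟩
      obtain ⟨J₁, J₁inv, hJ₁eq, hJ1a, hJ1b, hJ1P⟩ := lift_parahoric ϖ hj₁
      obtain ⟨J₂, J₂inv, hJ₂eq, hJ2a, hJ2b, hJ2P⟩ := lift_parahoric ϖ hj₂
      subst hJ₁eq; subst hJ₂eq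
      have hdetJ₁ : IsUnit J₁.det := by
        have h := congrArg Matrix.det hJ1a
        rw [Matrix.det_mul, Matrix.det_one] at h
        exact IsUnit.of_mul_eq_one _ h
      set I := Ideal.span ({ϖ} : Set O) with hI
      set π := Ideal.Quotient.mk I with hπ
      set A := J₁.toBlocks₁₁ with hA
      set B := J₁.toBlocks₁₂ with hB
      set C := J₁.toBlocks₂₁ with hC
      set D := J₁.toBlocks₂₂ with hD
      have hJ₁ : J₁ = Matrix.fromBlocks A B C D := (Matrix.fromBlocks_toBlocks J₁).symm
      have hCmem : ∀ i j, C i j ∈ I := fun i j => hJ1P i j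
      have hCπ : C.map π = 0 := by
        ext i j
        exact Ideal.Quotient.eq_zero_iff_mem.mpr (hCmem i j)
      have hdetDπ : IsUnit (D.map π).det := by
        have h1 : IsUnit ((J₁.map π).det) := by
          rw [show J₁.map ⇑π = π.mapMatrix J₁ from rfl, ← RingHom.map_det]
          exact hdetJ₁.map π
        rw [hJ₁, Matrix.fromBlocks_map, hCπ, Matrix.det_fromBlocks_zero₂₁] at h1
        exact isUnit_of_mul_isUnit_right h1
      have hV1 : D.map π * (D.map π)⁻¹ = 1 := Matrix.mul_nonsing_inv _ hdetDπ
      have hV2 : (D.map π)⁻¹ * D.map π = 1 := Matrix.nonsing_inv_mul _ hdetDπ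
      choose W hW using fun i j => Ideal.Quotient.mk_surjective ((D.map π)⁻¹ i j)
      have hWπ : (Matrix.of W).map π = (D.map π)⁻¹ := by
        ext i j; exact hW i j
      obtain ⟨m, ⟨hmRep, hmc⟩, -⟩ := hRep (B * Matrix.of W)
      have hmπ : m.map π = (B * Matrix.of W).map π := by
        ext i j
        refine (Ideal.Quotient.eq).mpr ?_
        obtain ⟨c, hc⟩ := hmc i j
        have : m i j - (B * Matrix.of W) i j = -(ϖ * c) := by rw [← hc]; ring
        rw [this]
        exact I.neg_mem (Ideal.mem_span_singleton.mpr ⟨c, rfl⟩)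
      have hBmD : ∀ i j, (B - m * D) i j ∈ I := by
        have hmap : (B - m * D).map π = B.map π - m.map π * D.map π := by
          ext i j
          simp [Matrix.map_apply, Matrix.sub_apply, Matrix.mul_apply, map_sub, map_sum, _root_.map_mul]
        have hzero : (B - m * D).map π = 0 := by
          rw [hmap, hmπ, Matrix.map_mul, hWπ, mul_assoc, hV2, mul_one, sub_self]
        intro i j
        exact Ideal.Quotient.eq_zero_iff_mem.mp (congrFun (congrFun hzero i) j)
      choose E hEe using fun i j => Ideal.mem_span_singleton.mp (hBmD i j)
      have hE : ϖ • (Matrix.of E) = B - m * D := by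
        ext i j
        simp only [Matrix.smul_apply, smul_eq_mul, Matrix.of_apply]
        exact (hEe i j).symm
      have hkey := keyeq ϖ A B C D m (Matrix.of E) hE
      set H₁ := Matrix.fromBlocks (A - m * C) (Matrix.of E) (ϖ • C) D with hH₁
      have hdetH₁ : IsUnit H₁.det := by
        have hdet := congrArg Matrix.det hkey
        rw [Matrix.det_mul, Matrix.det_mul, Matrix.det_mul, det_Umat, det_tMat, one_mul] at hdet
        have hcan : H₁.det = (Matrix.fromBlocks A B C D).det := by
          apply mul_left_cancel₀ (pow_ne_zero n hϖ0)
          rw [hdet, mul_comm]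
        rw [hcan, ← hJ₁]
        exact hdetJ₁
      have hH₁1 : H₁ * H₁⁻¹ = 1 := Matrix.mul_nonsing_inv _ hdetH₁
      have hH₁2 : H₁⁻¹ * H₁ = 1 := Matrix.nonsing_inv_mul _ hdetH₁
      have hHa : (H₁ * J₂) * (J₂inv * H₁⁻¹) = 1 := by
        rw [mul_assoc, ← mul_assoc J₂, hJ2a, one_mul, hH₁1]
      have hHb : (J₂inv * H₁⁻¹) * (H₁ * J₂) = 1 := by
        rw [mul_assoc, ← mul_assoc H₁⁻¹, hH₁2, one_mul, hJ2b]
      have hH₁P : POk ϖ H₁ := by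
        intro i j
        rw [hH₁, Matrix.fromBlocks_apply₂₁]
        simp only [Matrix.smul_apply, smul_eq_mul]
        exact Ideal.mem_span_singleton.mpr ⟨C i j, rfl⟩
      refine ⟨m, hmRep, (H₁ * J₂).map (algebraMap O F),
        mk_parahoric ϖ hHa hHb (POk_mul ϖ hH₁P hJ2P), ?_⟩
      rw [← map_Umat, ← map_tMat, ← Matrix.map_mul, ← Matrix.map_mul, ← Matrix.map_mul,
        ← Matrix.map_mul]
      apply congrArg (Matrix.map · (algebraMap O F))
      rw [← mul_assoc (Umat m * tMat n O ϖ) H₁ J₂, hkey, ← hJ₁]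
    · rintro ⟨m, hm, k, hk, rfl⟩
      obtain ⟨K, Kinv, hKeq, hKa, hKb, hKP⟩ := lift_parahoric ϖ hk
      subst hKeq
      have hUa : Umat m * Umat (-m) = 1 := by rw [Umat_mul, add_neg_cancel, hUmat0]
      have hUb : Umat (-m) * Umat m = 1 := by rw [Umat_mul, neg_add_cancel, hUmat0]
      have hUP : POk ϖ (Umat m) := by
        intro i j
        rw [Umat, Matrix.fromBlocks_apply₂₁]
        simp
      exact ⟨(Umat m).map (algebraMap O F), K.map (algebraMap O F),
        mk_parahoric ϖ hUa hUb hUP, mk_parahoric ϖ hKa hKb hKP,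
        by rw [map_Umat]⟩
  · intro m hm m' hm' hne
    rw [Set.disjoint_left]
    rintro g ⟨k, hk, hgk⟩ ⟨k', hk', hgk'⟩
    obtain ⟨K, Kinv, hkK, hKa, hKb, -⟩ := lift_parahoric ϖ hk
    obtain ⟨K', K'inv, hkK', hK'a, hK'b, -⟩ := lift_parahoric ϖ hk'
    have heq : Umat m * tMat n O ϖ * K = Umat m' * tMat n O ϖ * K' := by
      apply mapinj (F := F)
      rw [Matrix.map_mul, Matrix.map_mul, Matrix.map_mul, Matrix.map_mul, map_Umat, map_Umat,
        map_tMat, ← hkK, ← hkK', ← hgk, ← hgk']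
    have heq2 : Umat (m - m') * tMat n O ϖ = tMat n O ϖ * (K' * Kinv) := by
      have h3 : Umat m * tMat n O ϖ = Umat m' * tMat n O ϖ * (K' * Kinv) := by
        calc Umat m * tMat n O ϖ = Umat m * tMat n O ϖ * (K * Kinv) := by rw [hKa, mul_one]
        _ = Umat m * tMat n O ϖ * K * Kinv := by simp only [mul_assoc]
        _ = Umat m' * tMat n O ϖ * K' * Kinv := by rw [heq]
        _ = Umat m' * tMat n O ϖ * (K' * Kinv) := by simp only [mul_assoc]
      calc Umat (m - m') * tMat n O ϖ = Umat (-m' + m) * tMat n O ϖ := by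
            rw [sub_eq_add_neg, add_comm]
        _ = Umat (-m') * (Umat m * tMat n O ϖ) := by rw [← mul_assoc, Umat_mul]
        _ = Umat (-m') * (Umat m' * tMat n O ϖ * (K' * Kinv)) := by rw [h3]
        _ = (Umat (-m') * Umat m') * tMat n O ϖ * (K' * Kinv) := by
            simp only [mul_assoc]
        _ = tMat n O ϖ * (K' * Kinv) := by rw [Umat_mul, neg_add_cancel, hUmat0, one_mul]
    have key : ∀ i j, m i j - m' i j = ϖ * ((K' * Kinv) (Sum.inl i) (Sum.inr j)) := by
      intro i j
      have h := congrFun (congrFun heq2 (Sum.inl i)) (Sum.inr j)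
      rw [Umat_mul_tMat_apply, tMat_mul_apply] at h
      rw [← Matrix.sub_apply]
      exact h
    obtain ⟨r, -, hun⟩ := hRep m
    have h1 : m = r := hun m ⟨hm, fun i j => ⟨0, by ring⟩⟩
    have h2 : m' = r := hun m' ⟨hm', fun i j => ⟨(K' * Kinv) (Sum.inl i) (Sum.inr j), key i j⟩⟩
    exact hne (h1.trans h2.symm)
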